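/- A minimal Ferrers-bad bipartite graph (one for which T(G) > F(G) but every proper subgraph arising from splitting at a cutvertex is Ferrers-good) has no cutvertex; that is, if a connected bipartite graph G has a cutvertex, and both pieces G₁, G₂ of the decomposition at the cutvertex are Ferrers-good, then G is Ferrers-good. -/

import Mathlib

noncomputable section
open scoped Classical

def spanningTreeCount {V : Type*} (G : SimpleGraph V) : ℕ :=
  {H : G.Subgraph | H.IsSpanning ∧ H.coe.IsTree}.ncard

def sdeg {V : Type*} (G : SimpleGraph V) (v : V) : ℕ := (G.neighborSet v).ncard

def IsBipartitionOn {V : Type*} (G : SimpleGraph V) (X Y : Set V) : Prop :=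
  Disjoint X Y ∧ X ∪ Y = Set.univ ∧
    ∀ u v, G.Adj u v → (u ∈ X ∧ v ∈ Y) ∨ (u ∈ Y ∧ v ∈ X)

def FerrersGood {V : Type*} [Fintype V] (G : SimpleGraph V) (X Y : Set V) : Prop :=
  (spanningTreeCount G : ℚ) ≤
    (∏ v : V, (sdeg G v : ℚ)) / ((X.ncard : ℚ) * (Y.ncard : ℚ))

section Helpers
open SimpleGraph
variable {V : Type*}

lemma adj_iff' (G : SimpleGraph V) (H K : G.Subgraph) (hcover : H ⊔ K = ⊤) (u v : V) :
    G.Adj u v ↔ H.Adj u v ∨ K.Adj u v := by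
  rw [← Subgraph.top_adj (G := G), ← hcover, Subgraph.sup_adj]

def restr (G : SimpleGraph V) (H K : G.Subgraph) (hcover : H ⊔ K = ⊤) (x : V)
    (hmeet : H.verts ∩ K.verts = {x}) (T : G.Subgraph) : H.coe.Subgraph where
  verts := Set.univ
  Adj a b := T.Adj a.1 b.1
  adj_sub := by
    intro a b h
    rcases (adj_iff' G H K hcover a.1 b.1).1 (T.adj_sub h) with h1 | h2
    · exact h1
    · exfalso
      have ha : a.1 = x := by
        have : a.1 ∈ H.verts ∩ K.verts := ⟨a.2, h2.fst_mem⟩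
        rwa [hmeet] at this
      have hb : b.1 = x := by
        have : b.1 ∈ H.verts ∩ K.verts := ⟨b.2, h2.symm.fst_mem⟩
        rwa [hmeet] at this
      exact (T.adj_sub h).ne (ha.trans hb.symm)
  edge_vert := fun _ => Set.mem_univ _
  symm := ⟨fun a b h => T.adj_symm h⟩

lemma acyclic_of_hom {W W' : Type*} {A : SimpleGraph W} {B : SimpleGraph W'}
    (f : A →g B) (hf : Function.Injective f) (h : B.IsAcyclic) : A.IsAcyclic :=
  fun _ c hc => h (c.map f) (hc.map hf)

lemma cross (G : SimpleGraph V) (H K : G.Subgraph) (hcover : H ⊔ K = ⊤) (x : V)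
    (hmeet : H.verts ∩ K.verts = {x}) (T : G.Subgraph) :
    ∀ {w v : V} (q : T.spanningCoe.Walk w v), w ∉ H.verts → v ∈ H.verts → x ∈ q.support := by
  intro w v q
  induction q with
  | nil => intro hw hv; exact absurd hv hw
  | cons h q ih =>
    rename_i a b c
    intro hw hv
    by_cases hb : b ∈ H.verts
    · have hK : K.Adj a b := by
        rcases (adj_iff' G H K hcover a b).1 (T.adj_sub h) with h1 | h2
        · exact absurd h1.fst_mem hw
        · exact h2
      have hbx : b = x := by
        have : b ∈ H.verts ∩ K.verts := ⟨hb, hK.snd_mem⟩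
        rwa [hmeet] at this
      rw [SimpleGraph.Walk.support_cons]
      exact List.mem_cons_of_mem _ (hbx ▸ q.start_mem_support)
    · rw [SimpleGraph.Walk.support_cons]
      exact List.mem_cons_of_mem _ (ih hb hv)

lemma reach (G : SimpleGraph V) (H K : G.Subgraph) (hcover : H ⊔ K = ⊤) (x : V)
    (hmeet : H.verts ∩ K.verts = {x}) (T : G.Subgraph) :
    ∀ {u v : V} (p : T.spanningCoe.Walk u v), p.IsPath → ∀ (hu : u ∈ H.verts)
      (hv : v ∈ H.verts),
      (restr G H K hcover x hmeet T).spanningCoe.Reachable ⟨u, hu⟩ ⟨v, hv⟩ := by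
  intro u v p
  induction p with
  | nil => intro _ hu hv; rfl
  | cons h q ih =>
    rename_i a b c
    intro hp hu hv
    rw [SimpleGraph.Walk.cons_isPath_iff] at hp
    by_cases hb : b ∈ H.verts
    · have step : (restr G H K hcover x hmeet T).spanningCoe.Adj ⟨a, hu⟩ ⟨b, hb⟩ := h
      exact step.reachable.trans (ih hp.1 hb hv)
    · exfalso
      have hK : K.Adj a b := by
        rcases (adj_iff' G H K hcover a b).1 (T.adj_sub h) with h1 | h2
        · exact absurd h1.snd_mem hb
        · exact h2
      have hax : a = x := by
        have : a ∈ H.verts ∩ K.verts := ⟨hu, hK.fst_mem⟩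
        rwa [hmeet] at this
      exact hp.2 (hax ▸ cross G H K hcover x hmeet T q hb hv)

lemma restr_spanning (G : SimpleGraph V) (H K : G.Subgraph) (hcover : H ⊔ K = ⊤) (x : V)
    (hmeet : H.verts ∩ K.verts = {x}) (T : G.Subgraph) :
    (restr G H K hcover x hmeet T).IsSpanning := fun _ => Set.mem_univ _

lemma restr_isTree (G : SimpleGraph V) (H K : G.Subgraph) (hcover : H ⊔ K = ⊤) (x : V)
    (hmeet : H.verts ∩ K.verts = {x}) (hx : x ∈ H.verts) (T : G.Subgraph)
    (hsp : T.IsSpanning) (htree : T.coe.IsTree) :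
    (restr G H K hcover x hmeet T).coe.IsTree := by
  have e := T.spanningCoeEquivCoeOfSpanning hsp
  have hTacyc : T.spanningCoe.IsAcyclic := acyclic_of_hom e.toHom e.injective htree.2
  have hTconn : T.spanningCoe.Connected :=
    SimpleGraph.Connected.map e.symm.toHom e.symm.toEquiv.surjective htree.1
  set R := restr G H K hcover x hmeet T with hR
  have e' := R.spanningCoeEquivCoeOfSpanning (restr_spanning G H K hcover x hmeet T)
  have hRconn : R.spanningCoe.Connected := by
    have : Nonempty ↥H.verts := ⟨⟨x, hx⟩⟩
    refine SimpleGraph.Connected.mk fun a b => ?_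
    obtain ⟨w⟩ := hTconn.preconnected a.1 b.1
    have := reach G H K hcover x hmeet T w.toPath w.toPath.2 a.2 b.2
    simpa using this
  have hRacyc : R.spanningCoe.IsAcyclic := by
    refine acyclic_of_hom ⟨Subtype.val, ?_⟩ Subtype.val_injective hTacyc
    intro a b h
    exact h
  exact ⟨SimpleGraph.Connected.map e'.toHom e'.toEquiv.surjective hRconn,
    acyclic_of_hom e'.symm.toHom e'.symm.injective hRacyc⟩

instance subgraphFinite' {W : Type*} (A : SimpleGraph W) [Finite W] : Finite A.Subgraph := by
  have : Function.Injective (fun H : A.Subgraph => (H.verts, H.Adj)) := by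
    intro a b h
    exact SimpleGraph.Subgraph.ext (congrArg Prod.fst h) (congrArg Prod.snd h)
  exact Finite.of_injective _ this

lemma ncard_prod' {α β : Type*} (s : Set α) (t : Set β) :
    (s ×ˢ t).ncard = s.ncard * t.ncard := by
  rw [← Nat.card_coe_set_eq, ← Nat.card_coe_set_eq, ← Nat.card_coe_set_eq,
    ← Nat.card_prod]
  exact Nat.card_congr (Equiv.Set.prod s t)

lemma count_le (G : SimpleGraph V) [Fintype V] (H₁ H₂ : G.Subgraph)
    (hcover : H₁ ⊔ H₂ = ⊤) (x : V) (hmeet : H₁.verts ∩ H₂.verts = {x})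
    (hx₁ : x ∈ H₁.verts) (hx₂ : x ∈ H₂.verts) :
    spanningTreeCount G ≤ spanningTreeCount H₁.coe * spanningTreeCount H₂.coe := by
  have hcover₂ : H₂ ⊔ H₁ = ⊤ := by rwa [sup_comm]
  have hmeet₂ : H₂.verts ∩ H₁.verts = {x} := by rwa [Set.inter_comm]
  set S : Set G.Subgraph := {T | T.IsSpanning ∧ T.coe.IsTree} with hS
  set S₁ : Set H₁.coe.Subgraph := {T | T.IsSpanning ∧ T.coe.IsTree} with hS₁
  set S₂ : Set H₂.coe.Subgraph := {T | T.IsSpanning ∧ T.coe.IsTree} with hS₂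
  set f : G.Subgraph → H₁.coe.Subgraph × H₂.coe.Subgraph :=
    fun T => (restr G H₁ H₂ hcover x hmeet T, restr G H₂ H₁ hcover₂ x hmeet₂ T) with hf
  have hmaps : ∀ T ∈ S, f T ∈ S₁ ×ˢ S₂ := by
    intro T hT
    exact ⟨⟨restr_spanning G H₁ H₂ hcover x hmeet T,
        restr_isTree G H₁ H₂ hcover x hmeet hx₁ T hT.1 hT.2⟩,
      ⟨restr_spanning G H₂ H₁ hcover₂ x hmeet₂ T,
        restr_isTree G H₂ H₁ hcover₂ x hmeet₂ hx₂ T hT.1 hT.2⟩⟩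
  have key : ∀ T ∈ S, ∀ T' ∈ S, f T = f T' → ∀ u v, T.Adj u v → T'.Adj u v := by
    intro T hT T' hT' heq u v h
    rcases (adj_iff' G H₁ H₂ hcover u v).1 (T.adj_sub h) with h1 | h2
    · have hstep : (restr G H₁ H₂ hcover x hmeet T).Adj ⟨u, h1.fst_mem⟩ ⟨v, h1.snd_mem⟩ := h
      rw [show restr G H₁ H₂ hcover x hmeet T = restr G H₁ H₂ hcover x hmeet T' from
        congrArg Prod.fst heq] at hstep
      exact hstep
    · have hstep : (restr G H₂ H₁ hcover₂ x hmeet₂ T).Adj ⟨u, h2.fst_mem⟩ ⟨v, h2.snd_mem⟩ := h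
      rw [show restr G H₂ H₁ hcover₂ x hmeet₂ T = restr G H₂ H₁ hcover₂ x hmeet₂ T' from
        congrArg Prod.snd heq] at hstep
      exact hstep
  have hinj : Set.InjOn f S := by
    intro T hT T' hT' heq
    refine SimpleGraph.Subgraph.ext ?_ ?_
    · rw [SimpleGraph.Subgraph.isSpanning_iff.1 hT.1, SimpleGraph.Subgraph.isSpanning_iff.1 hT'.1]
    · funext u v
      exact propext ⟨key T hT T' hT' heq u v, key T' hT' T hT heq.symm u v⟩
  calc S.ncard ≤ (S₁ ×ˢ S₂).ncard :=
        Set.ncard_le_ncard_of_injOn f hmaps hinj (Set.toFinite _)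
    _ = S₁.ncard * S₂.ncard := ncard_prod' S₁ S₂

lemma sdeg_eq (G : SimpleGraph V) (H K : G.Subgraph) (hcover : H ⊔ K = ⊤) (x : V)
    (hmeet : H.verts ∩ K.verts = {x}) (v : V) (hv : v ∈ H.verts) (hne : v ≠ x) :
    sdeg G v = sdeg H.coe ⟨v, hv⟩ := by
  have himg : G.neighborSet v = Subtype.val '' (H.coe.neighborSet ⟨v, hv⟩) := by
    ext u
    simp only [SimpleGraph.mem_neighborSet, Set.mem_image]
    constructor
    · intro h
      rcases (adj_iff' G H K hcover v u).1 h with h1 | h2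
      · exact ⟨⟨u, h1.snd_mem⟩, h1, rfl⟩
      · exfalso
        refine hne ?_
        have : v ∈ H.verts ∩ K.verts := ⟨hv, h2.fst_mem⟩
        rwa [hmeet] at this
    · rintro ⟨w, hw, rfl⟩
      exact H.adj_sub hw
  rw [sdeg, sdeg, himg, Set.ncard_image_of_injective _ Subtype.val_injective]

lemma sdeg_x (G : SimpleGraph V) [Fintype V] (H K : G.Subgraph) (hcover : H ⊔ K = ⊤) (x : V)
    (hmeet : H.verts ∩ K.verts = {x}) (hx₁ : x ∈ H.verts) (hx₂ : x ∈ K.verts) :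
    sdeg G x = sdeg H.coe ⟨x, hx₁⟩ + sdeg K.coe ⟨x, hx₂⟩ := by
  have himg : G.neighborSet x =
      (Subtype.val '' (H.coe.neighborSet ⟨x, hx₁⟩)) ∪
      (Subtype.val '' (K.coe.neighborSet ⟨x, hx₂⟩)) := by
    ext u
    simp only [SimpleGraph.mem_neighborSet, Set.mem_union, Set.mem_image]
    constructor
    · intro h
      rcases (adj_iff' G H K hcover x u).1 h with h1 | h2
      · exact Or.inl ⟨⟨u, h1.snd_mem⟩, h1, rfl⟩
      · exact Or.inr ⟨⟨u, h2.snd_mem⟩, h2, rfl⟩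
    · rintro (⟨w, hw, rfl⟩ | ⟨w, hw, rfl⟩)
      · exact H.adj_sub hw
      · exact K.adj_sub hw
  have hdisj : Disjoint (Subtype.val '' (H.coe.neighborSet ⟨x, hx₁⟩))
      (Subtype.val '' (K.coe.neighborSet ⟨x, hx₂⟩)) := by
    rw [Set.disjoint_left]
    rintro u ⟨w, hw, rfl⟩ ⟨w', hw', hww'⟩
    have hu : (w : V) ∈ H.verts ∩ K.verts := ⟨w.2, hww' ▸ w'.2⟩
    rw [hmeet] at hu
    have hwx : (w : V) = x := hu
    have hadj : G.Adj x (w : V) := H.adj_sub hw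
    rw [hwx] at hadj
    exact hadj.ne rfl
  rw [sdeg, sdeg, sdeg, himg, Set.ncard_union_eq hdisj (Set.toFinite _) (Set.toFinite _),
    Set.ncard_image_of_injective _ Subtype.val_injective,
    Set.ncard_image_of_injective _ Subtype.val_injective]

lemma exists_neighbor {W : Type*} (A : SimpleGraph W) (hA : A.Preconnected) {u w : W}
    (hne : u ≠ w) : (A.neighborSet u).Nonempty := by
  obtain ⟨p⟩ := hA u w
  cases p with
  | nil => exact absurd rfl hne
  | cons h q => exact ⟨_, h⟩

end Helpers

theorem stmt7 {V : Type*} [Fintype V] (G : SimpleGraph V) (hconn : G.Connected)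
    (H₁ H₂ : G.Subgraph)
    (hcover : H₁ ⊔ H₂ = ⊤) (x : V) (hmeet : H₁.verts ∩ H₂.verts = {x})
    (hx₁ : x ∈ H₁.verts) (hx₂ : x ∈ H₂.verts)
    (hprop₁ : H₁.verts ≠ Set.univ) (hprop₂ : H₂.verts ≠ Set.univ)
    (X₁ Y₁ : Set ↥H₁.verts) (X₂ Y₂ : Set ↥H₂.verts)
    (hb₁ : IsBipartitionOn H₁.coe X₁ Y₁) (hb₂ : IsBipartitionOn H₂.coe X₂ Y₂)
    (hxX₁ : (⟨x, hx₁⟩ : ↥H₁.verts) ∈ X₁) (hxX₂ : (⟨x, hx₂⟩ : ↥H₂.verts) ∈ X₂)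
    (hg₁ : FerrersGood H₁.coe X₁ Y₁) (hg₂ : FerrersGood H₂.coe X₂ Y₂) :
    FerrersGood G ((Subtype.val '' X₁) ∪ (Subtype.val '' X₂))
      ((Subtype.val '' Y₁) ∪ (Subtype.val '' Y₂)) := by
  classical
  have hcover₂ : H₂ ⊔ H₁ = ⊤ := by rwa [sup_comm]
  have hmeet₂ : H₂.verts ∩ H₁.verts = {x} := by rwa [Set.inter_comm]
  simp only [FerrersGood] at hg₁ hg₂ ⊢
  have hTle := count_le G H₁ H₂ hcover x hmeet hx₁ hx₂
  by_cases hz : spanningTreeCount H₁.coe * spanningTreeCount H₂.coe = 0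
  · have h0 : spanningTreeCount G = 0 := Nat.le_zero.mp (le_trans hTle (le_of_eq hz))
    rw [h0]
    push_cast
    positivity
  have ht₁ : 0 < spanningTreeCount H₁.coe :=
    Nat.pos_of_ne_zero fun h => hz (by rw [h, zero_mul])
  have ht₂ : 0 < spanningTreeCount H₂.coe :=
    Nat.pos_of_ne_zero fun h => hz (by rw [h, mul_zero])
  -- connectivity of the pieces
  have hconn₁ : H₁.coe.Connected := by
    obtain ⟨K₁, hsp, htree⟩ :=
      Set.nonempty_of_ncard_ne_zero (s := {T : H₁.coe.Subgraph | T.IsSpanning ∧ T.coe.IsTree})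
        ht₁.ne'
    have e := K₁.spanningCoeEquivCoeOfSpanning hsp
    have h := SimpleGraph.Connected.map e.symm.toHom e.symm.toEquiv.surjective htree.1
    exact h.mono K₁.spanningCoe_le
  have hconn₂ : H₂.coe.Connected := by
    obtain ⟨K₂, hsp, htree⟩ :=
      Set.nonempty_of_ncard_ne_zero (s := {T : H₂.coe.Subgraph | T.IsSpanning ∧ T.coe.IsTree})
        ht₂.ne'
    have e := K₂.spanningCoeEquivCoeOfSpanning hsp
    have h := SimpleGraph.Connected.map e.symm.toHom e.symm.toEquiv.surjective htree.1
    exact h.mono K₂.spanningCoe_le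
  have hverts : H₁.verts ∪ H₂.verts = Set.univ := by
    rw [← SimpleGraph.Subgraph.verts_sup, hcover, SimpleGraph.Subgraph.verts_top]
  -- auxiliary vertices
  obtain ⟨v₁, hv₁⟩ : ∃ v, v ∉ H₂.verts := by
    by_contra h; push_neg at h; exact hprop₂ (Set.eq_univ_of_forall h)
  have hv₁H : v₁ ∈ H₁.verts := by
    have h := Set.mem_univ v₁; rw [← hverts] at h
    rcases h with h | h
    · exact h
    · exact absurd h hv₁
  have hv₁x : v₁ ≠ x := fun h => hv₁ (h ▸ hx₂)
  obtain ⟨v₂, hv₂⟩ : ∃ v, v ∉ H₁.verts := by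
    by_contra h; push_neg at h; exact hprop₁ (Set.eq_univ_of_forall h)
  have hv₂H : v₂ ∈ H₂.verts := by
    have h := Set.mem_univ v₂; rw [← hverts] at h
    rcases h with h | h
    · exact absurd h hv₂
    · exact h
  have hv₂x : v₂ ≠ x := fun h => hv₂ (h ▸ hx₁)
  -- positive degrees
  have hdeg₁ : ∀ v : ↥H₁.verts, 0 < sdeg H₁.coe v := by
    intro v
    have : ∃ u : ↥H₁.verts, v ≠ u := by
      by_cases hvx : v = ⟨x, hx₁⟩
      · exact ⟨⟨v₁, hv₁H⟩, fun h => hv₁x (by simpa [hvx] using congrArg Subtype.val h.symm)⟩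
      · exact ⟨⟨x, hx₁⟩, hvx⟩
    obtain ⟨u, hu⟩ := this
    exact (Set.ncard_pos (Set.toFinite _)).mpr (exists_neighbor H₁.coe hconn₁.preconnected hu)
  have hdeg₂ : ∀ v : ↥H₂.verts, 0 < sdeg H₂.coe v := by
    intro v
    have : ∃ u : ↥H₂.verts, v ≠ u := by
      by_cases hvx : v = ⟨x, hx₂⟩
      · exact ⟨⟨v₂, hv₂H⟩, fun h => hv₂x (by simpa [hvx] using congrArg Subtype.val h.symm)⟩
      · exact ⟨⟨x, hx₂⟩, hvx⟩
    obtain ⟨u, hu⟩ := this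
    exact (Set.ncard_pos (Set.toFinite _)).mpr (exists_neighbor H₂.coe hconn₂.preconnected hu)
  -- neighbors of x lie in Y
  have hnx₁ : H₁.coe.neighborSet ⟨x, hx₁⟩ ⊆ Y₁ := by
    intro u hu
    rcases hb₁.2.2 _ _ hu with ⟨_, h⟩ | ⟨h, _⟩
    · exact h
    · exact absurd hxX₁ (Set.disjoint_right.1 hb₁.1 h)
  have hnx₂ : H₂.coe.neighborSet ⟨x, hx₂⟩ ⊆ Y₂ := by
    intro u hu
    rcases hb₂.2.2 _ _ hu with ⟨_, h⟩ | ⟨h, _⟩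
    · exact h
    · exact absurd hxX₂ (Set.disjoint_right.1 hb₂.1 h)
  have hd₁b : sdeg H₁.coe ⟨x, hx₁⟩ ≤ Y₁.ncard := Set.ncard_le_ncard hnx₁ (Set.toFinite _)
  have hd₂d : sdeg H₂.coe ⟨x, hx₂⟩ ≤ Y₂.ncard := Set.ncard_le_ncard hnx₂ (Set.toFinite _)
  -- cardinalities of the unions
  have hXa : (Subtype.val '' X₁) ∩ (Subtype.val '' X₂) = {x} := by
    apply subset_antisymm
    · rintro u ⟨⟨p, hp, rfl⟩, ⟨q, hq, hqp⟩⟩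
      have h : (p : V) ∈ H₁.verts ∩ H₂.verts := ⟨p.2, hqp ▸ q.2⟩
      rwa [hmeet] at h
    · rintro u hu
      rw [Set.mem_singleton_iff] at hu
      subst hu
      exact ⟨⟨_, hxX₁, rfl⟩, ⟨_, hxX₂, rfl⟩⟩
  have hXcard : ((Subtype.val '' X₁) ∪ (Subtype.val '' X₂)).ncard + 1 =
      X₁.ncard + X₂.ncard := by
    have h := Set.ncard_union_add_ncard_inter (Subtype.val '' X₁) (Subtype.val '' X₂)
      (Set.toFinite _) (Set.toFinite _)
    rwa [hXa, Set.ncard_singleton, Set.ncard_image_of_injective _ Subtype.val_injective,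
      Set.ncard_image_of_injective _ Subtype.val_injective] at h
  have hYdisj : Disjoint (Subtype.val '' Y₁) (Subtype.val '' Y₂) := by
    rw [Set.disjoint_left]
    rintro u ⟨p, hp, rfl⟩ ⟨q, hq, hqp⟩
    have h : (p : V) ∈ H₁.verts ∩ H₂.verts := ⟨p.2, hqp ▸ q.2⟩
    rw [hmeet, Set.mem_singleton_iff] at h
    have : p = (⟨x, hx₁⟩ : ↥H₁.verts) := Subtype.ext h
    rw [this] at hp
    exact absurd hxX₁ (Set.disjoint_right.1 hb₁.1 hp)
  have hYcard : ((Subtype.val '' Y₁) ∪ (Subtype.val '' Y₂)).ncard =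
      Y₁.ncard + Y₂.ncard := by
    rw [Set.ncard_union_eq hYdisj (Set.toFinite _) (Set.toFinite _),
      Set.ncard_image_of_injective _ Subtype.val_injective,
      Set.ncard_image_of_injective _ Subtype.val_injective]
  -- product identities
  set a : ℚ := (X₁.ncard : ℚ) with ha
  set b : ℚ := (Y₁.ncard : ℚ) with hb
  set c : ℚ := (X₂.ncard : ℚ) with hc
  set d : ℚ := (Y₂.ncard : ℚ) with hd
  set d₁ : ℚ := (sdeg H₁.coe ⟨x, hx₁⟩ : ℚ) with hd₁
  set d₂ : ℚ := (sdeg H₂.coe ⟨x, hx₂⟩ : ℚ) with hd₂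
  set D : ℚ := (sdeg G x : ℚ) with hD
  set P₁ : ℚ := ∏ v : ↥H₁.verts, (sdeg H₁.coe v : ℚ) with hP₁
  set P₂ : ℚ := ∏ v : ↥H₂.verts, (sdeg H₂.coe v : ℚ) with hP₂
  set Q₁ : ℚ := ∏ v : ↥H₁.verts, (sdeg G v.1 : ℚ) with hQ₁
  set Q₂ : ℚ := ∏ v : ↥H₂.verts, (sdeg G v.1 : ℚ) with hQ₂
  set PV : ℚ := ∏ v : V, (sdeg G v : ℚ) with hPV
  have hDsum : D = d₁ + d₂ := by
    rw [hD, hd₁, hd₂, sdeg_x G H₁ H₂ hcover x hmeet hx₁ hx₂]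
    push_cast
    ring
  have hQ₁eq : Q₁ * d₁ = P₁ * D := by
    have e1 : Q₁ = D * ∏ v ∈ Finset.univ.erase (⟨x, hx₁⟩ : ↥H₁.verts), (sdeg G v.1 : ℚ) :=
      (Finset.mul_prod_erase Finset.univ (fun v : ↥H₁.verts => (sdeg G v.1 : ℚ))
        (Finset.mem_univ (⟨x, hx₁⟩ : ↥H₁.verts))).symm
    have e2 : P₁ = d₁ * ∏ v ∈ Finset.univ.erase (⟨x, hx₁⟩ : ↥H₁.verts), (sdeg H₁.coe v : ℚ) :=
      (Finset.mul_prod_erase Finset.univ (fun v : ↥H₁.verts => (sdeg H₁.coe v : ℚ))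
        (Finset.mem_univ (⟨x, hx₁⟩ : ↥H₁.verts))).symm
    have e3 : ∏ v ∈ Finset.univ.erase (⟨x, hx₁⟩ : ↥H₁.verts), (sdeg G v.1 : ℚ) =
        ∏ v ∈ Finset.univ.erase (⟨x, hx₁⟩ : ↥H₁.verts), (sdeg H₁.coe v : ℚ) := by
      refine Finset.prod_congr rfl fun v hv => ?_
      have hvx : (v : V) ≠ x := fun h =>
        (Finset.mem_erase.1 hv).1 (Subtype.ext h)
      rw [sdeg_eq G H₁ H₂ hcover x hmeet v.1 v.2 hvx]
    rw [e1, e2, e3]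
    ring
  have hQ₂eq : Q₂ * d₂ = P₂ * D := by
    have e1 : Q₂ = D * ∏ v ∈ Finset.univ.erase (⟨x, hx₂⟩ : ↥H₂.verts), (sdeg G v.1 : ℚ) :=
      (Finset.mul_prod_erase Finset.univ (fun v : ↥H₂.verts => (sdeg G v.1 : ℚ))
        (Finset.mem_univ (⟨x, hx₂⟩ : ↥H₂.verts))).symm
    have e2 : P₂ = d₂ * ∏ v ∈ Finset.univ.erase (⟨x, hx₂⟩ : ↥H₂.verts), (sdeg H₂.coe v : ℚ) :=
      (Finset.mul_prod_erase Finset.univ (fun v : ↥H₂.verts => (sdeg H₂.coe v : ℚ))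
        (Finset.mem_univ (⟨x, hx₂⟩ : ↥H₂.verts))).symm
    have e3 : ∏ v ∈ Finset.univ.erase (⟨x, hx₂⟩ : ↥H₂.verts), (sdeg G v.1 : ℚ) =
        ∏ v ∈ Finset.univ.erase (⟨x, hx₂⟩ : ↥H₂.verts), (sdeg H₂.coe v : ℚ) := by
      refine Finset.prod_congr rfl fun v hv => ?_
      have hvx : (v : V) ≠ x := fun h =>
        (Finset.mem_erase.1 hv).1 (Subtype.ext h)
      rw [sdeg_eq G H₂ H₁ hcover₂ x hmeet₂ v.1 v.2 hvx]
    rw [e1, e2, e3]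
    ring
  have hQsplit : PV * D = Q₁ * Q₂ := by
    set A₁ : Finset V := H₁.verts.toFinset with hA₁
    set A₂ : Finset V := H₂.verts.toFinset with hA₂
    have hxA₂ : x ∈ A₂ := Set.mem_toFinset.2 hx₂
    have e4 : (Finset.univ : Finset V) = A₁ ∪ A₂.erase x := by
      ext u
      simp only [Finset.mem_univ, Finset.mem_union, Finset.mem_erase, hA₁, hA₂,
        Set.mem_toFinset, true_iff]
      by_cases h1 : u ∈ H₁.verts
      · exact Or.inl h1
      · have h2 : u ∈ H₂.verts := by
          have h := Set.mem_univ u; rw [← hverts] at h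
          rcases h with h | h
          · exact absurd h h1
          · exact h
        exact Or.inr ⟨fun h => h1 (h ▸ hx₁), h2⟩
    have e5 : Disjoint A₁ (A₂.erase x) := by
      rw [Finset.disjoint_left]
      intro u hu1 hu2
      rw [Finset.mem_erase] at hu2
      have h : u ∈ H₁.verts ∩ H₂.verts :=
        ⟨Set.mem_toFinset.1 hu1, Set.mem_toFinset.1 hu2.2⟩
      rw [hmeet, Set.mem_singleton_iff] at h
      exact hu2.1 h
    have e6 : Q₁ = ∏ v ∈ A₁, (sdeg G v : ℚ) :=
      (Finset.prod_subtype A₁ (fun v => Set.mem_toFinset) fun v => (sdeg G v : ℚ)).symm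
    have e7 : Q₂ = ∏ v ∈ A₂, (sdeg G v : ℚ) :=
      (Finset.prod_subtype A₂ (fun v => Set.mem_toFinset) fun v => (sdeg G v : ℚ)).symm
    have e8 : Q₂ = D * ∏ v ∈ A₂.erase x, (sdeg G v : ℚ) := by
      rw [e7, ← Finset.mul_prod_erase A₂ _ hxA₂]
    have e9 : PV = (∏ v ∈ A₁, (sdeg G v : ℚ)) * ∏ v ∈ A₂.erase x, (sdeg G v : ℚ) := by
      rw [hPV, show (Finset.univ : Finset V) = A₁ ∪ A₂.erase x from e4,
        Finset.prod_union e5]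
    rw [e9, e8, ← e6]
    ring
  -- positivity facts
  have hd₁pos : 0 < d₁ := by rw [hd₁]; exact_mod_cast hdeg₁ ⟨x, hx₁⟩
  have hd₂pos : 0 < d₂ := by rw [hd₂]; exact_mod_cast hdeg₂ ⟨x, hx₂⟩
  have ha1 : 1 ≤ a := by
    rw [ha]
    exact_mod_cast (Set.ncard_pos (Set.toFinite _)).mpr ⟨_, hxX₁⟩
  have hc1 : 1 ≤ c := by
    rw [hc]
    exact_mod_cast (Set.ncard_pos (Set.toFinite _)).mpr ⟨_, hxX₂⟩
  have hd₁b' : d₁ ≤ b := by rw [hd₁, hb]; exact_mod_cast hd₁b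
  have hd₂d' : d₂ ≤ d := by rw [hd₂, hd]; exact_mod_cast hd₂d
  have hbpos : 0 < b := lt_of_lt_of_le hd₁pos hd₁b'
  have hdpos : 0 < d := lt_of_lt_of_le hd₂pos hd₂d'
  have hP₁pos : 0 < P₁ := Finset.prod_pos fun v _ => by exact_mod_cast hdeg₁ v
  have hP₂pos : 0 < P₂ := Finset.prod_pos fun v _ => by exact_mod_cast hdeg₂ v
  have hDpos : 0 < D := by rw [hDsum]; linarith [hd₁pos, hd₂pos]
  have hPVeq : PV * (d₁ * d₂) = P₁ * P₂ * (d₁ + d₂) := by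
    apply mul_right_cancel₀ hDpos.ne'
    linear_combination (d₁ * d₂) * hQsplit + (Q₂ * d₂) * hQ₁eq + (P₁ * D) * hQ₂eq +
      (P₁ * P₂ * D) * hDsum
  -- cardinalities in ℚ
  have hXN : (((Subtype.val '' X₁) ∪ (Subtype.val '' X₂)).ncard : ℚ) = a + c - 1 := by
    have h : ((((Subtype.val '' X₁) ∪ (Subtype.val '' X₂)).ncard : ℚ)) + 1 = a + c := by
      rw [ha, hc]
      exact_mod_cast congrArg (Nat.cast : ℕ → ℚ) hXcard
    linarith
  have hYN : (((Subtype.val '' Y₁) ∪ (Subtype.val '' Y₂)).ncard : ℚ) = b + d := by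
    rw [hb, hd]
    exact_mod_cast congrArg (Nat.cast : ℕ → ℚ) hYcard
  -- the final chain
  have hTG : (spanningTreeCount G : ℚ) ≤
      (spanningTreeCount H₁.coe : ℚ) * (spanningTreeCount H₂.coe : ℚ) := by
    exact_mod_cast hTle
  have hapos : 0 < a := by linarith
  have hcpos : 0 < c := by linarith
  have habpos : 0 < a * b := mul_pos hapos hbpos
  have hcdpos : 0 < c * d := mul_pos hcpos hdpos
  have hg₁' : (spanningTreeCount H₁.coe : ℚ) ≤ P₁ / (a * b) := hg₁
  have hg₂' : (spanningTreeCount H₂.coe : ℚ) ≤ P₂ / (c * d) := hg₂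
  have hstep : (spanningTreeCount G : ℚ) ≤ (P₁ / (a * b)) * (P₂ / (c * d)) := by
    refine le_trans hTG (mul_le_mul hg₁' hg₂' (Nat.cast_nonneg _) ?_)
    exact le_trans (Nat.cast_nonneg _) hg₁'
  refine le_trans hstep ?_
  have hden1 : 0 < a * b * (c * d) := mul_pos habpos hcdpos
  have hden2 : 0 < (a + c - 1) * (b + d) := mul_pos (by linarith) (by linarith)
  rw [hXN, hYN, div_mul_div_comm, div_le_div_iff₀ hden1 hden2]
  -- now a polynomial inequality
  have key1 : a + c - 1 ≤ a * c := by
    have h' := mul_nonneg (sub_nonneg.2 ha1) (sub_nonneg.2 hc1)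
    have h'' : (a - 1) * (c - 1) = a * c - a - c + 1 := by ring
    rw [h''] at h'
    linarith
  have key2 : d₁ * d₂ * (b + d) ≤ (d₁ + d₂) * (b * d) := by
    have t1 : d₁ * b * d₂ ≤ d₁ * b * d :=
      mul_le_mul_of_nonneg_left hd₂d' (mul_nonneg hd₁pos.le hbpos.le)
    have t2 : d₂ * d * d₁ ≤ d₂ * d * b :=
      mul_le_mul_of_nonneg_left hd₁b' (mul_nonneg hd₂pos.le hdpos.le)
    have e1 : d₁ * d₂ * (b + d) = d₁ * b * d₂ + d₂ * d * d₁ := by ring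
    have e2 : (d₁ + d₂) * (b * d) = d₁ * b * d + d₂ * d * b := by ring
    rw [e1, e2]
    linarith
  have key : d₁ * d₂ * ((a + c - 1) * (b + d)) ≤ (d₁ + d₂) * (a * c * (b * d)) := by
    calc d₁ * d₂ * ((a + c - 1) * (b + d)) = (a + c - 1) * (d₁ * d₂ * (b + d)) := by ring
      _ ≤ (a * c) * ((d₁ + d₂) * (b * d)) := by
          refine mul_le_mul key1 key2 ?_ (mul_nonneg hapos.le hcpos.le)
          have : 0 < d₁ * d₂ * (b + d) :=
            mul_pos (mul_pos hd₁pos hd₂pos) (by linarith)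
          linarith
      _ = (d₁ + d₂) * (a * c * (b * d)) := by ring
  have h6 : PV * (a * b * (c * d)) * (d₁ * d₂) = P₁ * P₂ * ((d₁ + d₂) * (a * c * (b * d))) := by
    linear_combination (a * b * (c * d)) * hPVeq
  rw [← mul_le_mul_iff_of_pos_right (mul_pos hd₁pos hd₂pos), h6]
  calc P₁ * P₂ * ((a + c - 1) * (b + d)) * (d₁ * d₂)
      = P₁ * P₂ * (d₁ * d₂ * ((a + c - 1) * (b + d))) := by ring
    _ ≤ P₁ * P₂ * ((d₁ + d₂) * (a * c * (b * d))) :=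
        mul_le_mul_of_nonneg_left key (mul_pos hP₁pos hP₂pos).le
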